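/- Consider the proportional-fine replicator dynamics ẋ_j = x_j (w_j − w̄(x))(1 − λ p(b*(x))) on the simplex Σ_d, where w̄(x) = Σ_i x_i w_i. Suppose b*(x) depends on x only through f̄(x) = λ Σ_j x_j w_j via a smooth function with the chain rule as in the model. Then the function V(x) = (1 − λ p(b*(x)))² is non-increasing along trajectories; more precisely, d/dt V(x(t)) = −2λ² V(x) p'(b̂(f̄)) b̂'(f̄) Var_x(w) ≤ 0, where Var_x(w) = Σ_j x_j w_j² − w̄(x)² ≥ 0. -/

import Mathlib

/-- `V(x) = (1 - λ p(b*(x)))²` is a Lyapunov function for the proportional-fine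
replicator dynamics: along trajectories
`dV/dt = -2λ² V p'(b̂(f̄)) b̂'(f̄) Var_x(w) ≤ 0`. -/
theorem stmt12 {d : ℕ} (w : Fin d → ℝ) (hw : StrictMono w) (hwpos : ∀ j, 0 < w j)
    (lam : ℝ) (hlam : 0 < lam)
    (p p' bhat bhat' : ℝ → ℝ)
    (hp : ∀ s, HasDerivAt p (p' s) s) (hp' : ∀ s, 0 < p' s)
    (hb : ∀ s, HasDerivAt bhat (bhat' s) s) (hb' : ∀ s, 0 < bhat' s)
    (x : ℝ → Fin d → ℝ)
    (hsimp : ∀ t, (∀ j, 0 ≤ x t j) ∧ ∑ j, x t j = 1)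
    (hode : ∀ t j, HasDerivAt (fun s => x s j)
      (x t j * (w j - ∑ i, x t i * w i) *
        (1 - lam * p (bhat (lam * ∑ i, x t i * w i)))) t) :
    ∀ t,
      HasDerivAt (fun s => (1 - lam * p (bhat (lam * ∑ i, x s i * w i))) ^ 2)
        (-2 * lam ^ 2 * (1 - lam * p (bhat (lam * ∑ i, x t i * w i))) ^ 2 *
          p' (bhat (lam * ∑ i, x t i * w i)) * bhat' (lam * ∑ i, x t i * w i) *
          ((∑ j, x t j * (w j) ^ 2) - (∑ i, x t i * w i) ^ 2)) t ∧
      (-2 * lam ^ 2 * (1 - lam * p (bhat (lam * ∑ i, x t i * w i))) ^ 2 *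
          p' (bhat (lam * ∑ i, x t i * w i)) * bhat' (lam * ∑ i, x t i * w i) *
          ((∑ j, x t j * (w j) ^ 2) - (∑ i, x t i * w i) ^ 2)) ≤ 0 := by
  intro t
  set St : ℝ := ∑ i, x t i * w i with hSt
  set Q : ℝ := ∑ j, x t j * (w j) ^ 2 with hQ
  set c : ℝ := 1 - lam * p (bhat (lam * St)) with hc
  -- derivative of the mean fitness
  have hSder : HasDerivAt (fun s => ∑ i, x s i * w i) ((Q - St ^ 2) * c) t := by
    have h := HasDerivAt.fun_sum (u := (Finset.univ : Finset (Fin d)))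
      (fun j _ => (hode t j).mul_const (w j))
    simp only [← hSt, ← hc] at h
    refine h.congr_deriv ?_
    have : ∀ j, x t j * (w j - St) * c * w j
        = (x t j * (w j) ^ 2) * c - (x t j * w j) * St * c := by intro j; ring
    simp only [this, Finset.sum_sub_distrib, ← Finset.sum_mul, ← hQ, ← hSt]
    ring
  -- derivative of V by chain rule
  have hinner : HasDerivAt (fun s => lam * ∑ i, x s i * w i)
      (lam * ((Q - St ^ 2) * c)) t := hSder.const_mul lam
  have hbb : HasDerivAt (fun s => bhat (lam * ∑ i, x s i * w i))
      (bhat' (lam * St) * (lam * ((Q - St ^ 2) * c))) t :=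
    (hb (lam * St)).comp t hinner
  have hpp : HasDerivAt (fun s => p (bhat (lam * ∑ i, x s i * w i)))
      (p' (bhat (lam * St)) * (bhat' (lam * St) * (lam * ((Q - St ^ 2) * c)))) t :=
    (hp (bhat (lam * St))).comp t hbb
  have hlin : HasDerivAt (fun s => 1 - lam * p (bhat (lam * ∑ i, x s i * w i)))
      (-(lam * (p' (bhat (lam * St)) * (bhat' (lam * St) * (lam * ((Q - St ^ 2) * c)))))) t :=
    (hpp.const_mul lam).const_sub 1
  have hV := hlin.pow 2
  constructor
  · refine hV.congr_deriv ?_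
    simp only [← hSt, ← hc, Nat.cast_ofNat]
    push_cast
    ring
  · -- nonpositivity: Var ≥ 0 by Cauchy-Schwarz
    have hx := (hsimp t).1
    have hsum := (hsimp t).2
    have hvar : 0 ≤ Q - St ^ 2 := by
      have key : (∑ j, x t j * w j) ^ 2 ≤ (∑ j, x t j) * ∑ j, x t j * (w j) ^ 2 := by
        have := Finset.sum_mul_sq_le_sq_mul_sq Finset.univ
          (fun j => Real.sqrt (x t j)) (fun j => Real.sqrt (x t j) * w j)
        have e1 : ∀ j, Real.sqrt (x t j) * (Real.sqrt (x t j) * w j) = x t j * w j := by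
          intro j; rw [← mul_assoc, Real.mul_self_sqrt (hx j)]
        have e2 : ∀ j, Real.sqrt (x t j) ^ 2 = x t j := fun j => Real.sq_sqrt (hx j)
        have e3 : ∀ j, (Real.sqrt (x t j) * w j) ^ 2 = x t j * (w j) ^ 2 := by
          intro j; rw [mul_pow, e2]
        simpa only [e1, e2, e3] using this
      rw [hsum, one_mul] at key
      simpa [hQ, hSt] using sub_nonneg.mpr key
    have hnn : 0 ≤ 2 * lam ^ 2 * c ^ 2 * p' (bhat (lam * St)) * bhat' (lam * St)
        * (Q - St ^ 2) := by
      have : 0 ≤ 2 * lam ^ 2 * c ^ 2 * p' (bhat (lam * St)) * bhat' (lam * St) := by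
        have := (hp' (bhat (lam * St))).le
        have := (hb' (lam * St)).le
        positivity
      exact mul_nonneg this hvar
    have key : -2 * lam ^ 2 * c ^ 2 * p' (bhat (lam * St)) * bhat' (lam * St)
        * (Q - St ^ 2)
        = -(2 * lam ^ 2 * c ^ 2 * p' (bhat (lam * St)) * bhat' (lam * St)
        * (Q - St ^ 2)) := by ring
    rw [key]
    linarith
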